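/- arXiv:1908.05775 — 4 statements merged into one kernel-verified Lean document; each statement's English description precedes it below -/
import Mathlib

section
/- Let A = I + N be an upper triangular ℕ×ℕ matrix over a commutative domain R with positive part R_+, with 1's on the diagonal, all entries in R_+, and N strictly upper triangular and nonzero. If (i,j) is the position of a nonzero entry of N minimizing the pair (j-i, i) lexicographically among nonzero entries, then the (i,j) entry of A^{-1} equals -N_{ij}. Consequently, if both A and A^{-1} have all entries in R_+, then N = 0, i.e., A = I. -/
/-- Let A = I + N be upper triangular with 1's on the diagonal, all entries
    in R₊, and N strictly upper triangular and nonzero. If (i,j) is a nonzero entry of N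
    minimizing (j-i, i) lexicographically, then (A⁻¹)ᵢⱼ = -Nᵢⱼ. Consequently, if all entries
    of A⁻¹ are also in R₊, then N = 0, i.e. A = I. -/
theorem stmt_6 {R : Type*} [CommRing R] [IsDomain R] (Rp : Set R)
    (h1 : (1 : R) ∈ Rp)
    (hadd : ∀ a ∈ Rp, ∀ b ∈ Rp, a + b ∈ Rp)
    (hmul : ∀ a ∈ Rp, ∀ b ∈ Rp, a * b ∈ Rp)
    (hcap : ∀ a : R, a ∈ Rp → -a ∈ Rp → a = 0)
    (m : ℕ) (N A : Matrix (Fin m) (Fin m) R)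
    (hN : ∀ i j : Fin m, j ≤ i → N i j = 0)
    (hA : A = 1 + N)
    (hApos : ∀ i j, A i j ∈ Rp) :
    (∀ i j : Fin m, N i j ≠ 0 →
      (∀ i' j' : Fin m, N i' j' ≠ 0 →
        toLex (((j : ℕ) - (i : ℕ), (i : ℕ))) ≤ toLex (((j' : ℕ) - (i' : ℕ), (i' : ℕ)))) →
      A⁻¹ i j = - N i j) ∧
    ((∀ i j, A⁻¹ i j ∈ Rp) → N = 0) := by
  have hAlow : ∀ i j : Fin m, j < i → A i j = 0 := by
    intro i j hij
    rw [hA]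
    simp [Matrix.one_apply_ne (ne_of_gt hij), hN i j hij.le]
  have hAdiag : ∀ i : Fin m, A i i = 1 := by
    intro i
    rw [hA]
    simp [hN i i le_rfl]
  have hAtri : A.BlockTriangular (id : Fin m → Fin m) := fun i j hij => hAlow i j hij
  have hdet : A.det = 1 := by
    rw [Matrix.det_of_upperTriangular hAtri]
    simp [hAdiag]
  have hu : IsUnit A.det := by rw [hdet]; exact isUnit_one
  haveI : Invertible A := A.invertibleOfIsUnitDet hu
  have hBtri : A⁻¹.BlockTriangular (id : Fin m → Fin m) :=
    Matrix.blockTriangular_inv_of_blockTriangular hAtri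
  have hBlow : ∀ i j : Fin m, j < i → A⁻¹ i j = 0 := fun i j hij => hBtri hij
  have hmulAB : A * A⁻¹ = 1 := Matrix.mul_nonsing_inv A hu
  have hBdiag : ∀ j : Fin m, A⁻¹ j j = 1 := by
    intro j
    have h := congrFun (congrFun hmulAB j) j
    rw [Matrix.mul_apply, Matrix.one_apply_eq] at h
    rw [Finset.sum_eq_single j] at h
    · rwa [hAdiag, one_mul] at h
    · intro k _ hk
      rcases lt_or_gt_of_ne hk with hlt | hgt
      · rw [hAlow j k hlt, zero_mul]
      · rw [hBlow k j hgt, mul_zero]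
    · simp
  have part1 : ∀ i j : Fin m, N i j ≠ 0 →
      (∀ i' j' : Fin m, N i' j' ≠ 0 →
        toLex (((j : ℕ) - (i : ℕ), (i : ℕ))) ≤ toLex (((j' : ℕ) - (i' : ℕ), (i' : ℕ)))) →
      A⁻¹ i j = - N i j := by
    classical
    intro i j hNij hmin
    have hij : i < j := by
      by_contra h
      exact hNij (hN i j (not_lt.1 h))
    have h := congrFun (congrFun hmulAB i) j
    rw [Matrix.mul_apply, Matrix.one_apply_ne (ne_of_lt hij)] at h
    have hsub : ({i, j} : Finset (Fin m)) ⊆ Finset.univ := Finset.subset_univ _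
    rw [← Finset.sum_subset hsub ?_] at h
    · rw [Finset.sum_pair (ne_of_lt hij), hAdiag, one_mul, hBdiag, mul_one] at h
      have : A i j = N i j := by
        rw [hA]; simp [Matrix.one_apply_ne (ne_of_lt hij)]
      rw [this] at h
      linear_combination h
    · intro k _ hk
      simp only [Finset.mem_insert, Finset.mem_singleton, not_or] at hk
      obtain ⟨hki, hkj⟩ := hk
      rcases lt_trichotomy k i with hlt | heq | hgt
      · rw [hAlow i k hlt, zero_mul]
      · exact absurd heq hki
      rcases lt_trichotomy k j with hlt | heq | hgt2
      · -- i < k < j: show A i k = 0, i.e. N i k = 0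
        have hNik : N i k = 0 := by
          by_contra hne
          have := hmin i k hne
          rw [Prod.Lex.le_iff] at this
          have hk1 : (j : ℕ) - (i:ℕ) ≤ (k : ℕ) - (i:ℕ) := by
            rcases this with h' | ⟨h', _⟩
            · exact h'.le
            · exact h'.le
          have e1 : (i:ℕ) < (k:ℕ) := hgt
          have e2 : (k:ℕ) < (j:ℕ) := hlt
          omega
        have : A i k = 0 := by
          rw [hA]; simp [Matrix.one_apply_ne (ne_of_lt hgt), hNik]
        rw [this, zero_mul]
      · exact absurd heq hkj
      · rw [hBlow k j hgt2, mul_zero]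
  refine ⟨part1, ?_⟩
  classical
  intro hBpos
  by_contra hN0
  -- choose minimal nonzero entry
  have hne : (Finset.univ.filter (fun p : Fin m × Fin m => N p.1 p.2 ≠ 0)).Nonempty := by
    rw [Finset.filter_nonempty_iff]
    by_contra hc
    push_neg at hc
    apply hN0
    ext i j
    simpa using hc (i, j) (Finset.mem_univ _)
  obtain ⟨p, hp, hpmin⟩ := Finset.exists_min_image _
    (fun p : Fin m × Fin m => toLex ((p.2 : ℕ) - (p.1 : ℕ), (p.1 : ℕ))) hne
  simp only [Finset.mem_filter] at hp
  have hNp : N p.1 p.2 ≠ 0 := hp.2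
  have hmin' : ∀ i' j' : Fin m, N i' j' ≠ 0 →
      toLex (((p.2 : ℕ) - (p.1 : ℕ), (p.1 : ℕ))) ≤ toLex (((j' : ℕ) - (i' : ℕ), (i' : ℕ))) := by
    intro i' j' hn
    exact hpmin (i', j') (Finset.mem_filter.2 ⟨Finset.mem_univ _, hn⟩)
  have hinv := part1 p.1 p.2 hNp hmin'
  have hij : p.1 < p.2 := by
    by_contra h
    exact hNp (hN _ _ (not_lt.1 h))
  have hApq : A p.1 p.2 = N p.1 p.2 := by
    rw [hA]; simp [Matrix.one_apply_ne (ne_of_lt hij)]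
  apply hNp
  apply hcap
  · rw [← hApq]; exact hApos _ _
  · rw [← hinv]; exact hBpos _ _
end

section
/- Suppose a, b, b_n (n ∈ ℤ), c_0, c_1 are elements of an associative ℤ[q^{±1}]-algebra with a central, satisfying a·b_n = q² b_{n+1} + q^{-2} b_{n-1} + c_n for all n, where c_n = c_0 for n even and c_n = c_1 for n odd, and b_0 = b, with c_0, c_1 central. Then for all n ≥ 0, T_n(a)·b = q^{2n} b_n + q^{-2n} b_{-n} + c_0 f_n(a) + c_1 g_n(a), where f_n(a) = Σ_{0<i≤n, i odd} [i] T̂_{n-i}(a) and g_n(a) = Σ_{0<i≤n, i even} [i] T̂_{n-i}(a). -/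
open Polynomial

/-- Chebyshev polynomials of type one: T₀=2, T₁=x, Tₙ = x Tₙ₋₁ - Tₙ₋₂. -/
noncomputable def Tc : ℕ → Polynomial ℤ
  | 0 => 2
  | 1 => X
  | n + 2 => X * Tc (n + 1) - Tc n

/-- Chebyshev polynomials of type two: S₀=1, S₁=x, Sₙ = x Sₙ₋₁ - Sₙ₋₂. -/
noncomputable def Sc : ℕ → Polynomial ℤ
  | 0 => 1
  | 1 => X
  | n + 2 => X * Sc (n + 1) - Sc n

/-- Normalized Chebyshev polynomials of type one: T̂₀=1, T̂ₙ=Tₙ for n ≥ 1. -/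
noncomputable def Tch (n : ℕ) : Polynomial ℤ := if n = 0 then 1 else Tc n

/-- The quantum integer [i] = q^{2i-2} + q^{2i-6} + ⋯ + q^{2-2i} in ℤ[q^{±1}]. -/
noncomputable def qint (i : ℕ) : LaurentPolynomial ℤ :=
  ∑ j ∈ Finset.range i, LaurentPolynomial.T (2 * (i : ℤ) - 2 - 4 * j)

/-- T̂ₙ viewed in ℤ[q^{±1}][a]. -/
noncomputable def TchL (n : ℕ) : Polynomial (LaurentPolynomial ℤ) :=
  (Tch n).map (Int.castRingHom (LaurentPolynomial ℤ))

/-- fₙ(a) = Σ_{0<i≤n, i odd} [i] T̂_{n-i}(a). -/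
noncomputable def fpol (n : ℕ) : Polynomial (LaurentPolynomial ℤ) :=
  ∑ i ∈ (Finset.range (n + 1)).filter (fun i => Odd i),
    Polynomial.C (qint i) * TchL (n - i)

/-- gₙ(a) = Σ_{0<i≤n, i even} [i] T̂_{n-i}(a). -/
noncomputable def gpol (n : ℕ) : Polynomial (LaurentPolynomial ℤ) :=
  ∑ i ∈ (Finset.range (n + 1)).filter (fun i => 0 < i ∧ Even i),
    Polynomial.C (qint i) * TchL (n - i)

lemma qint_zero : qint 0 = 0 := by simp [qint]
lemma qint_one : qint 1 = 1 := by simp [qint]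
lemma qint_add_two (n : ℕ) : qint (n + 2) =
    qint n + LaurentPolynomial.T (2 * n + 2) + LaurentPolynomial.T (-(2 * n + 2)) := by
  rw [qint, Finset.sum_range_succ', Finset.sum_range_succ, qint]
  push_cast
  have h1 : (2 * ((n:ℤ) + 2) - 2 - 0) = 2 * n + 2 := by ring
  have h2 : (2 * ((n:ℤ) + 2) - 2 - 4 * (↑n + 1)) = -(2 * n + 2) := by ring
  rw [h1, h2]
  have : ∀ j ∈ Finset.range n, (LaurentPolynomial.T (2 * ((n:ℤ)+2) - 2 - 4 * ((j:ℤ)+1)) : LaurentPolynomial ℤ)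
      = LaurentPolynomial.T (2 * (n:ℤ) - 2 - 4 * j) := by
    intro j _; congr 1; ring
  rw [Finset.sum_congr rfl this]
  ring

lemma TchL_zero : TchL 0 = 1 := by simp [TchL, Tch]
lemma TchL_one : TchL 1 = X := by simp [TchL, Tch, Tc]
lemma X_mul_TchL (m : ℕ) : X * TchL (m + 1) =
    TchL (m + 2) + TchL m + (if m = 0 then 1 else 0) := by
  match m with
  | 0 => simp [TchL, Tch, Tc]; ring
  | k + 1 =>
    simp only [TchL, Tch, if_neg (by omega : k + 1 + 2 ≠ 0), if_neg (by omega : k + 1 + 1 ≠ 0),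
      if_neg (by omega : k + 1 ≠ 0), if_neg (by omega : (k+1)+2 ≠ 0)]
    rw [show Tc (k + 1 + 2) = X * Tc (k + 1 + 1) - Tc (k + 1) from rfl]
    simp [Polynomial.map_sub, Polynomial.map_mul]

lemma fpol_zero : fpol 0 = 0 := by
  rw [fpol, show (Finset.range 1).filter (fun i => Odd i) = ∅ by decide]; simp

lemma fpol_one : fpol 1 = 1 := by
  rw [fpol, show (Finset.range 2).filter (fun i => Odd i) = {1} by decide]
  simp [qint_one, TchL_zero]

lemma gpol_zero : gpol 0 = 0 := by
  rw [gpol, show (Finset.range 1).filter (fun i => 0 < i ∧ Even i) = ∅ by decide]; simp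

lemma gpol_one : gpol 1 = 0 := by
  rw [gpol, show (Finset.range 2).filter (fun i => 0 < i ∧ Even i) = ∅ by decide]; simp

lemma fpol_rec (n : ℕ) : fpol (n + 2) =
    X * fpol (n + 1) - fpol n +
      (if Odd n then C (qint (n + 2)) - C (qint n) else 0) := by
  by_cases hodd : Odd n
  · have hn : n % 2 = 1 := Nat.odd_iff.mp hodd
    have hS2 : (Finset.range (n + 3)).filter (fun i => Odd i)
        = insert (n + 2) ((Finset.range (n + 1)).filter (fun i => Odd i)) := by
      ext i
      simp only [Finset.mem_filter, Finset.mem_range, Finset.mem_insert, Nat.odd_iff]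
      omega
    have hS1 : (Finset.range (n + 2)).filter (fun i => Odd i)
        = (Finset.range (n + 1)).filter (fun i => Odd i) := by
      ext i
      simp only [Finset.mem_filter, Finset.mem_range, Nat.odd_iff]
      omega
    rw [if_pos hodd, fpol, fpol, fpol, hS2, hS1,
      Finset.sum_insert (by simp only [Finset.mem_filter, Finset.mem_range, Nat.odd_iff]; omega),
      Finset.mul_sum]
    have hsum : ∑ i ∈ (Finset.range (n + 1)).filter (fun i => Odd i),
          X * (C (qint i) * TchL (n + 1 - i))
        = ∑ i ∈ (Finset.range (n + 1)).filter (fun i => Odd i),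
          (C (qint i) * TchL (n + 2 - i) + C (qint i) * TchL (n - i)
            + (if i = n then C (qint i) else 0)) := by
      refine Finset.sum_congr rfl fun i hi => ?_
      simp only [Finset.mem_filter, Finset.mem_range] at hi
      have hin : i ≤ n := by omega
      rw [show n + 1 - i = (n - i) + 1 by omega, show n + 2 - i = (n - i) + 2 by omega,
        mul_left_comm, X_mul_TchL]
      by_cases h : i = n
      · rw [if_pos (by omega : n - i = 0), if_pos h]; ring
      · rw [if_neg (by omega : ¬ n - i = 0), if_neg h]; ring
    rw [hsum, Finset.sum_add_distrib, Finset.sum_add_distrib,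
      Finset.sum_ite_eq' _ n (fun i => C (qint i)),
      if_pos (by simp only [Finset.mem_filter, Finset.mem_range, Nat.odd_iff]; omega)]
    rw [show n + 2 - (n + 2) = 0 by omega, TchL_zero]
    ring
  · have hn : n % 2 = 0 := Nat.even_iff.mp (Nat.not_odd_iff_even.mp hodd)
    have hS2 : (Finset.range (n + 3)).filter (fun i => Odd i)
        = insert (n + 1) ((Finset.range (n + 1)).filter (fun i => Odd i)) := by
      ext i
      simp only [Finset.mem_filter, Finset.mem_range, Finset.mem_insert, Nat.odd_iff]
      omega
    have hS1 : (Finset.range (n + 2)).filter (fun i => Odd i)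
        = insert (n + 1) ((Finset.range (n + 1)).filter (fun i => Odd i)) := by
      ext i
      simp only [Finset.mem_filter, Finset.mem_range, Finset.mem_insert, Nat.odd_iff]
      omega
    have hnotmem : n + 1 ∉ (Finset.range (n + 1)).filter (fun i => Odd i) := by
      simp only [Finset.mem_filter, Finset.mem_range, Nat.odd_iff]; omega
    rw [if_neg hodd, add_zero, fpol, fpol, fpol, hS2, hS1,
      Finset.sum_insert hnotmem, Finset.sum_insert hnotmem, mul_add, Finset.mul_sum]
    have hsum : ∑ i ∈ (Finset.range (n + 1)).filter (fun i => Odd i),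
          X * (C (qint i) * TchL (n + 1 - i))
        = ∑ i ∈ (Finset.range (n + 1)).filter (fun i => Odd i),
          (C (qint i) * TchL (n + 2 - i) + C (qint i) * TchL (n - i)) := by
      refine Finset.sum_congr rfl fun i hi => ?_
      simp only [Finset.mem_filter, Finset.mem_range, Nat.odd_iff] at hi
      have hin : i < n := by omega
      obtain ⟨k, hk⟩ : ∃ k, n - i = k + 1 := ⟨n - i - 1, by omega⟩
      rw [show n + 1 - i = k + 1 + 1 by omega, show n + 2 - i = k + 1 + 2 by omega, hk,
        mul_left_comm, X_mul_TchL, if_neg (by omega : ¬ k + 1 = 0)]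
      ring
    rw [hsum, Finset.sum_add_distrib]
    rw [show n + 2 - (n + 1) = 1 by omega, show n + 1 - (n + 1) = 0 by omega,
      TchL_zero, TchL_one]
    ring

lemma gpol_rec (n : ℕ) : gpol (n + 2) =
    X * gpol (n + 1) - gpol n +
      (if Even n then C (qint (n + 2)) - C (qint n) else 0) := by
  by_cases heven : Even n
  · have hn : n % 2 = 0 := Nat.even_iff.mp heven
    have hS2 : (Finset.range (n + 3)).filter (fun i => 0 < i ∧ Even i)
        = insert (n + 2) ((Finset.range (n + 1)).filter (fun i => 0 < i ∧ Even i)) := by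
      ext i
      simp only [Finset.mem_filter, Finset.mem_range, Finset.mem_insert, Nat.even_iff]
      omega
    have hS1 : (Finset.range (n + 2)).filter (fun i => 0 < i ∧ Even i)
        = (Finset.range (n + 1)).filter (fun i => 0 < i ∧ Even i) := by
      ext i
      simp only [Finset.mem_filter, Finset.mem_range, Nat.even_iff]
      omega
    rw [if_pos heven, gpol, gpol, gpol, hS2, hS1,
      Finset.sum_insert (by simp only [Finset.mem_filter, Finset.mem_range, Nat.even_iff]; omega),
      Finset.mul_sum]
    have hsum : ∑ i ∈ (Finset.range (n + 1)).filter (fun i => 0 < i ∧ Even i),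
          X * (C (qint i) * TchL (n + 1 - i))
        = ∑ i ∈ (Finset.range (n + 1)).filter (fun i => 0 < i ∧ Even i),
          (C (qint i) * TchL (n + 2 - i) + C (qint i) * TchL (n - i)
            + (if i = n then C (qint i) else 0)) := by
      refine Finset.sum_congr rfl fun i hi => ?_
      simp only [Finset.mem_filter, Finset.mem_range] at hi
      have hin : i ≤ n := by omega
      rw [show n + 1 - i = (n - i) + 1 by omega, show n + 2 - i = (n - i) + 2 by omega,
        mul_left_comm, X_mul_TchL]
      by_cases h : i = n
      · rw [if_pos (by omega : n - i = 0), if_pos h]; ring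
      · rw [if_neg (by omega : ¬ n - i = 0), if_neg h]; ring
    rw [hsum, Finset.sum_add_distrib, Finset.sum_add_distrib,
      Finset.sum_ite_eq' _ n (fun i => C (qint i))]
    rw [show n + 2 - (n + 2) = 0 by omega, TchL_zero]
    by_cases hn0 : n = 0
    · subst hn0
      rw [if_neg (by decide : (0:ℕ) ∉ (Finset.range 1).filter (fun i => 0 < i ∧ Even i))]
      rw [qint_zero, map_zero]
      ring
    · rw [if_pos (by simp only [Finset.mem_filter, Finset.mem_range, Nat.even_iff]; omega)]
      ring
  · have hn : n % 2 = 1 := Nat.odd_iff.mp (Nat.not_even_iff_odd.mp heven)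
    have hS2 : (Finset.range (n + 3)).filter (fun i => 0 < i ∧ Even i)
        = insert (n + 1) ((Finset.range (n + 1)).filter (fun i => 0 < i ∧ Even i)) := by
      ext i
      simp only [Finset.mem_filter, Finset.mem_range, Finset.mem_insert, Nat.even_iff]
      omega
    have hS1 : (Finset.range (n + 2)).filter (fun i => 0 < i ∧ Even i)
        = insert (n + 1) ((Finset.range (n + 1)).filter (fun i => 0 < i ∧ Even i)) := by
      ext i
      simp only [Finset.mem_filter, Finset.mem_range, Finset.mem_insert, Nat.even_iff]
      omega
    have hnotmem : n + 1 ∉ (Finset.range (n + 1)).filter (fun i => 0 < i ∧ Even i) := by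
      simp only [Finset.mem_filter, Finset.mem_range, Nat.even_iff]; omega
    rw [if_neg heven, add_zero, gpol, gpol, gpol, hS2, hS1,
      Finset.sum_insert hnotmem, Finset.sum_insert hnotmem, mul_add, Finset.mul_sum]
    have hsum : ∑ i ∈ (Finset.range (n + 1)).filter (fun i => 0 < i ∧ Even i),
          X * (C (qint i) * TchL (n + 1 - i))
        = ∑ i ∈ (Finset.range (n + 1)).filter (fun i => 0 < i ∧ Even i),
          (C (qint i) * TchL (n + 2 - i) + C (qint i) * TchL (n - i)) := by
      refine Finset.sum_congr rfl fun i hi => ?_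
      simp only [Finset.mem_filter, Finset.mem_range, Nat.even_iff] at hi
      have hin : i < n := by omega
      obtain ⟨k, hk⟩ : ∃ k, n - i = k + 1 := ⟨n - i - 1, by omega⟩
      rw [show n + 1 - i = k + 1 + 1 by omega, show n + 2 - i = k + 1 + 2 by omega, hk,
        mul_left_comm, X_mul_TchL, if_neg (by omega : ¬ k + 1 = 0)]
      ring
    rw [hsum, Finset.sum_add_distrib]
    rw [show n + 2 - (n + 1) = 1 by omega, show n + 1 - (n + 1) = 0 by omega,
      TchL_zero, TchL_one]
    ring


/-- if a·bₙ = q² b_{n+1} + q⁻² b_{n-1} + cₙ with a, c₀, c₁ central,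
    cₙ = c₀ for n even and c₁ for n odd, and b₀ = b, then
    Tₙ(a)·b = q^{2n} bₙ + q^{-2n} b₋ₙ + c₀ fₙ(a) + c₁ gₙ(a). -/
theorem stmt_9 {A : Type*} [Ring A] [Algebra (LaurentPolynomial ℤ) A]
    (a c0 c1 : A) (b : ℤ → A)
    (ha : a ∈ Set.center A) (hc0 : c0 ∈ Set.center A) (hc1 : c1 ∈ Set.center A)
    (hrec : ∀ n : ℤ, a * b n =
      (LaurentPolynomial.T 2 : LaurentPolynomial ℤ) • b (n + 1) +
      (LaurentPolynomial.T (-2) : LaurentPolynomial ℤ) • b (n - 1) +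
      (if Even n then c0 else c1)) :
    ∀ n : ℕ, Polynomial.aeval a (Tc n) * b 0 =
      (LaurentPolynomial.T (2 * (n : ℤ)) : LaurentPolynomial ℤ) • b n +
      (LaurentPolynomial.T (-(2 * (n : ℤ))) : LaurentPolynomial ℤ) • b (-(n : ℤ)) +
      c0 * Polynomial.aeval a (fpol n) + c1 * Polynomial.aeval a (gpol n) := by
  intro n
  induction n using Nat.twoStepInduction with
  | zero =>
    rw [show Tc 0 = 2 from rfl, map_ofNat, fpol_zero, gpol_zero]
    simp [two_mul]
  | one =>
    have h := hrec 0
    norm_num at h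
    simp only [Tc, Polynomial.aeval_X, fpol_one, gpol_one, map_one, map_zero, mul_one, mul_zero,
      add_zero, Nat.cast_one, mul_one]
    rw [h]
  | more n ih1 ih2 =>
    have hacomm := (Set.mem_center_iff.mp ha).comm
    have hca : ∀ x : A, a * (c0 * x) = c0 * (a * x) := fun x => by
      rw [← mul_assoc, hacomm c0, mul_assoc]
    have hcb : ∀ x : A, a * (c1 * x) = c1 * (a * x) := fun x => by
      rw [← mul_assoc, hacomm c1, mul_assoc]
    have h1 : a * b ((n:ℤ) + 1) = (LaurentPolynomial.T 2 : LaurentPolynomial ℤ) • b ((n:ℤ) + 2)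
        + (LaurentPolynomial.T (-2) : LaurentPolynomial ℤ) • b (n:ℤ)
        + (if Odd n then c0 else c1) := by
      have h := hrec ((n:ℤ) + 1)
      rw [show ((n:ℤ) + 1 + 1) = (n:ℤ) + 2 by ring, show ((n:ℤ) + 1 - 1) = (n:ℤ) by ring] at h
      have hpar : Even ((n:ℤ) + 1) ↔ Odd n := by
        rw [Int.even_add_one, Int.even_coe_nat, Nat.not_even_iff_odd]
      simp only [hpar] at h
      exact h
    have h2 : a * b (-((n:ℤ) + 1)) = (LaurentPolynomial.T 2 : LaurentPolynomial ℤ) • b (-(n:ℤ))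
        + (LaurentPolynomial.T (-2) : LaurentPolynomial ℤ) • b (-((n:ℤ) + 2))
        + (if Odd n then c0 else c1) := by
      have h := hrec (-((n:ℤ) + 1))
      rw [show (-((n:ℤ) + 1) + 1) = -(n:ℤ) by ring,
        show (-((n:ℤ) + 1) - 1) = -((n:ℤ) + 2) by ring] at h
      have hpar : Even (-((n:ℤ) + 1)) ↔ Odd n := by
        rw [even_neg, Int.even_add_one, Int.even_coe_nat, Nat.not_even_iff_odd]
      simp only [hpar] at h
      exact h
    have hTc2 : (Polynomial.aeval a (Tc (n + 2)) : A)
        = a * Polynomial.aeval a (Tc (n + 1)) - Polynomial.aeval a (Tc n) := by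
      rw [show Tc (n + 2) = Polynomial.X * Tc (n + 1) - Tc n from rfl]
      simp
    have hFrec : (Polynomial.aeval a (fpol (n + 2)) : A)
        = a * Polynomial.aeval a (fpol (n + 1)) - Polynomial.aeval a (fpol n)
          + (if Odd n then algebraMap (LaurentPolynomial ℤ) A (qint (n + 2))
              - algebraMap (LaurentPolynomial ℤ) A (qint n) else 0) := by
      rw [fpol_rec]
      simp [apply_ite (Polynomial.aeval a)]
    have hGrec : (Polynomial.aeval a (gpol (n + 2)) : A)
        = a * Polynomial.aeval a (gpol (n + 1)) - Polynomial.aeval a (gpol n)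
          + (if Even n then algebraMap (LaurentPolynomial ℤ) A (qint (n + 2))
              - algebraMap (LaurentPolynomial ℤ) A (qint n) else 0) := by
      rw [gpol_rec]
      simp [apply_ite (Polynomial.aeval a)]
    have hcor : ∀ c : A, c * (algebraMap (LaurentPolynomial ℤ) A (qint (n + 2))
          - algebraMap (LaurentPolynomial ℤ) A (qint n))
        = (LaurentPolynomial.T (2 * (n:ℤ) + 2) : LaurentPolynomial ℤ) • c
          + (LaurentPolynomial.T (-(2 * (n:ℤ) + 2)) : LaurentPolynomial ℤ) • c := by
      intro c
      have e : (algebraMap (LaurentPolynomial ℤ) A) (qint (n + 2))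
          - (algebraMap (LaurentPolynomial ℤ) A) (qint n)
          = (algebraMap (LaurentPolynomial ℤ) A) (LaurentPolynomial.T (2 * (n:ℤ) + 2))
            + (algebraMap (LaurentPolynomial ℤ) A) (LaurentPolynomial.T (-(2 * (n:ℤ) + 2))) := by
        rw [qint_add_two, map_add, map_add]; abel
      rw [e, mul_add, ← Algebra.commutes, ← Algebra.commutes, ← Algebra.smul_def,
        ← Algebra.smul_def]
    push_cast
    push_cast at ih1 ih2
    rw [hTc2, sub_mul, mul_assoc, ih2, ih1, hFrec, hGrec]
    rw [mul_add, mul_add, mul_add, mul_smul_comm, mul_smul_comm, h1, h2, hca, hcb]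
    by_cases hodd : Odd n
    · rw [if_pos hodd, if_neg (Nat.not_even_iff_odd.mpr hodd), if_pos hodd]
      simp only [mul_add, mul_zero, add_zero]
      rw [hcor c0]
      simp only [mul_sub]
      simp only [smul_add, smul_smul, ← LaurentPolynomial.T_add]
      ring_nf
      module
    · rw [if_neg hodd, if_pos (Nat.not_odd_iff_even.mp hodd), if_neg hodd]
      simp only [mul_add, mul_zero, add_zero]
      rw [hcor c1]
      simp only [mul_sub]
      simp only [smul_add, smul_smul, ← LaurentPolynomial.T_add]
      ring_nf
      module
end

section
/- Let R be a commutative domain with positive part R_+. Suppose (P_n) is a normalized sequence in R[x] such that the family {P_n(z)} in R[z] is a positive basis of R[z] (i.e., all products P_m(z)P_k(z) are R_+-linear combinations of the P_j(z)), that (P_n) ≥ (T̂_n), and that P_i = T̂_i for all i < k, where k ≥ 4. Then P_k = T̂_k. -/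
open Polynomial

lemma Tc_zero : Tc 0 = 2 := rfl
lemma Tc_one : Tc 1 = X := rfl
lemma Tc_rec (n : ℕ) : Tc (n+2) = X * Tc (n+1) - Tc n := rfl

lemma Tc_spec : ∀ n : ℕ, ((Tc (n+1)).Monic ∧ (Tc (n+1)).natDegree = n+1) ∧ (Tc n).natDegree ≤ n := by
  intro n
  induction n with
  | zero =>
    refine ⟨⟨?_, ?_⟩, ?_⟩
    · rw [Tc_one]; exact monic_X
    · rw [Tc_one]; exact natDegree_X
    · rw [Tc_zero]; simp
  | succ j ih =>
    obtain ⟨⟨hm, hd⟩, hle⟩ := ih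
    have hXd : (X * Tc (j+1)).natDegree = j + 2 := by
      rw [natDegree_mul X_ne_zero hm.ne_zero, natDegree_X, hd]; omega
    have hXm : (X * Tc (j+1)).Monic := monic_X.mul hm
    have hlt : (Tc j).natDegree < (X * Tc (j+1)).natDegree := by omega
    constructor
    · constructor
      · rw [Tc_rec, sub_eq_add_neg]
        apply hXm.add_of_left
        rw [degree_neg]
        exact degree_lt_degree hlt
      · rw [Tc_rec, natDegree_sub_eq_left_of_natDegree_lt hlt, hXd]
    · exact hd.le

lemma Tch_spec (n : ℕ) : (Tch n).Monic ∧ (Tch n).natDegree = n := by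
  cases n with
  | zero => constructor <;> simp [Tch]
  | succ j => rw [Tch, if_neg (Nat.succ_ne_zero j)]; exact (Tc_spec j).1

lemma Tc_mul_X (n : ℕ) : X * Tc (n+1) = Tc (n+2) + Tc n := by rw [Tc_rec]; ring

lemma Tc_two_mul (n : ℕ) : Tc 2 * Tc (n+2) = Tc (n+4) + Tc n := by
  have h2 : Tc 2 = X * X - 2 := by rw [Tc_rec 0, Tc_one, Tc_zero]
  have e1 := Tc_mul_X n
  have e2 := Tc_mul_X (n+1)
  have e3 := Tc_mul_X (n+2)
  rw [h2]
  linear_combination X * e2 + e3 + e1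
section
variable {R : Type*} [CommRing R]

lemma basis_coeff_top (Q : ℕ → Polynomial R)
    (hQ : ∀ i, (Q i).Monic ∧ (Q i).natDegree = i) (N : ℕ) (a : ℕ → R) :
    (∑ i ∈ Finset.range (N+1), Polynomial.C (a i) * Q i).coeff N = a N := by
  rw [Polynomial.finset_sum_coeff, Finset.sum_range_succ, Finset.sum_eq_zero, zero_add,
    Polynomial.coeff_C_mul]
  · rw [show (Q N).coeff N = 1 from by
      have h3 := (hQ N).1.coeff_natDegree
      rwa [(hQ N).2] at h3]
    rw [mul_one]
  · intro i hi
    rw [Polynomial.coeff_C_mul, Polynomial.coeff_eq_zero_of_natDegree_lt, mul_zero]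
    rw [(hQ i).2]
    exact Finset.mem_range.mp hi

lemma basis_zero (Q : ℕ → Polynomial R)
    (hQ : ∀ i, (Q i).Monic ∧ (Q i).natDegree = i) :
    ∀ (N : ℕ) (a : ℕ → R), (∑ i ∈ Finset.range N, Polynomial.C (a i) * Q i) = 0 →
      ∀ i < N, a i = 0 := by
  intro N
  induction N with
  | zero => intro a _ i hi; omega
  | succ M ih =>
    intro a h i hi
    have htop : a M = 0 := by
      have h2 := basis_coeff_top Q hQ M a
      rw [h] at h2
      simpa using h2.symm
    rcases Nat.lt_succ_iff_lt_or_eq.mp hi with h' | rfl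
    · apply ih a _ i h'
      rw [Finset.sum_range_succ, htop] at h
      simpa using h
    · exact htop

lemma basis_unique (Q : ℕ → Polynomial R)
    (hQ : ∀ i, (Q i).Monic ∧ (Q i).natDegree = i) (N : ℕ) (a b : ℕ → R)
    (h : ∑ i ∈ Finset.range N, Polynomial.C (a i) * Q i
       = ∑ i ∈ Finset.range N, Polynomial.C (b i) * Q i) :
    ∀ i < N, a i = b i := by
  intro i hi
  have h0 : ∑ i ∈ Finset.range N, Polynomial.C (a i - b i) * Q i = 0 := by
    simp only [Polynomial.C_sub, sub_mul, Finset.sum_sub_distrib, h, sub_self]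
  have h1 := basis_zero Q hQ N (fun i => a i - b i) h0 i hi
  exact sub_eq_zero.mp h1
end

noncomputable def Th (R : Type*) [CommRing R] (i : ℕ) : Polynomial R :=
  (Tch i).map (Int.castRingHom R)

lemma Th_spec (R : Type*) [CommRing R] [Nontrivial R] (i : ℕ) :
    (Th R i).Monic ∧ (Th R i).natDegree = i := by
  have h := Tch_spec i
  refine ⟨h.1.map _, ?_⟩
  show ((Tch i).map (Int.castRingHom R)).natDegree = i
  rw [Polynomial.Monic.natDegree_map h.1]; exact h.2

lemma Tch_eq_Tc (n : ℕ) (hn : n ≠ 0) : Tch n = Tc n := if_neg hn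

lemma Th_mul_one' (R : Type*) [CommRing R] (n : ℕ) :
    Th R 1 * Th R (n+3) = Th R (n+4) + Th R (n+2) := by
  show (Tch 1).map _ * (Tch (n+3)).map _ = (Tch (n+4)).map _ + (Tch (n+2)).map _
  rw [Tch_eq_Tc 1 (by omega), Tch_eq_Tc (n+3) (by omega), Tch_eq_Tc (n+4) (by omega),
    Tch_eq_Tc (n+2) (by omega), ← Polynomial.map_mul, ← Polynomial.map_add, Tc_one,
    Tc_mul_X (n+2)]

lemma map_Tc_eq (R : Type*) [CommRing R] (n : ℕ) :
    (Tc n).map (Int.castRingHom R) = Polynomial.C (if n = 0 then (2:R) else 1) * Th R n := by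
  cases n with
  | zero =>
    rw [Tc_zero, if_pos rfl]
    show ((2:Polynomial ℤ)).map _ = Polynomial.C 2 * (Tch 0).map _
    simp [Tch]
    exact (map_ofNat Polynomial.C 2).symm
  | succ j =>
    rw [if_neg (Nat.succ_ne_zero j)]
    show (Tc (j+1)).map _ = Polynomial.C 1 * (Tch (j+1)).map _
    rw [Tch_eq_Tc (j+1) (by omega), Polynomial.C_1, one_mul]

lemma Th_mul_two (R : Type*) [CommRing R] (n : ℕ) :
    Th R 2 * Th R (n+2) = Th R (n+4) + Polynomial.C (if n = 0 then (2:R) else 1) * Th R n := by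
  rw [← map_Tc_eq]
  show (Tch 2).map _ * (Tch (n+2)).map _ = (Tch (n+4)).map _ + (Tc n).map _
  rw [Tch_eq_Tc 2 (by omega), Tch_eq_Tc (n+2) (by omega), Tch_eq_Tc (n+4) (by omega),
    ← Polynomial.map_mul, ← Polynomial.map_add, Tc_two_mul]

/-- if (Pₙ) is normalized, {Pₙ(z)} is a positive basis of R[z],
    (Pₙ) ≥ (T̂ₙ), and Pᵢ = T̂ᵢ for all i < k where k ≥ 4, then P_k = T̂_k. -/
theorem stmt_10 {R : Type*} [CommRing R] [IsDomain R] (Rp : Set R)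
    (h1 : (1 : R) ∈ Rp)
    (hadd : ∀ a ∈ Rp, ∀ b ∈ Rp, a + b ∈ Rp)
    (hmul : ∀ a ∈ Rp, ∀ b ∈ Rp, a * b ∈ Rp)
    (hcap : ∀ a : R, a ∈ Rp → -a ∈ Rp → a = 0)
    (P : ℕ → Polynomial R)
    (hP : ∀ n, (P n).Monic ∧ (P n).natDegree = n)
    (hpos : ∀ m l : ℕ, ∃ c : ℕ → R, (∀ i, c i ∈ Rp) ∧
      P m * P l = ∑ i ∈ Finset.range (m + l + 1), Polynomial.C (c i) * P i)
    (hge : ∀ n, ∃ c : ℕ → R, (∀ i, c i ∈ Rp) ∧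
      P n = ∑ i ∈ Finset.range (n + 1),
        Polynomial.C (c i) * (Tch i).map (Int.castRingHom R))
    (k : ℕ) (hk : 4 ≤ k)
    (hlt : ∀ i < k, P i = (Tch i).map (Int.castRingHom R)) :
    P k = (Tch k).map (Int.castRingHom R) := by
  obtain ⟨m, rfl⟩ : ∃ m, k = m + 4 := ⟨k - 4, by omega⟩
  clear hk
  have hTh := Th_spec R
  obtain ⟨c, hc, hgeq₀⟩ := hge (m+4)
  have hgeq : P (m+4) = ∑ i ∈ Finset.range (m+4+1), Polynomial.C (c i) * Th R i := hgeq₀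
  -- c (m+4) = 1
  have hck : c (m+4) = 1 := by
    have h1' : (P (m+4)).coeff (m+4) = 1 := by
      have h2 := (hP (m+4)).1.coeff_natDegree
      rwa [(hP (m+4)).2] at h2
    rw [hgeq] at h1'
    rwa [basis_coeff_top (Th R) hTh (m+4) c] at h1'
  -- RHS transform
  have htrans : ∀ d : ℕ → R, ∑ i ∈ Finset.range (m+4+1), Polynomial.C (d i) * P i
      = ∑ i ∈ Finset.range (m+4+1),
          Polynomial.C ((if i < m+4 then d i else 0) + d (m+4) * c i) * Th R i := by
    intro d
    calc ∑ i ∈ Finset.range (m+4+1), Polynomial.C (d i) * P i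
        = (∑ i ∈ Finset.range (m+4), Polynomial.C (d i) * P i)
            + Polynomial.C (d (m+4)) * P (m+4) := Finset.sum_range_succ _ _
      _ = (∑ i ∈ Finset.range (m+4), Polynomial.C (d i) * Th R i)
            + Polynomial.C (d (m+4))
              * ∑ i ∈ Finset.range (m+4+1), Polynomial.C (c i) * Th R i := by
          rw [← hgeq]
          congr 1
          refine Finset.sum_congr rfl fun i hi => ?_
          rw [hlt i (Finset.mem_range.mp hi)]
          rfl
      _ = (∑ i ∈ Finset.range (m+4+1), Polynomial.C (if i < m+4 then d i else 0) * Th R i)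
            + ∑ i ∈ Finset.range (m+4+1), Polynomial.C (d (m+4) * c i) * Th R i := by
          congr 1
          · rw [Finset.sum_range_succ (fun i => Polynomial.C (if i < m+4 then d i else 0) * Th R i) (m+4)]
            rw [if_neg (lt_irrefl (m+4)), map_zero, zero_mul, add_zero]
            refine Finset.sum_congr rfl fun i hi => ?_
            rw [if_pos (Finset.mem_range.mp hi)]
          · rw [Finset.mul_sum]
            refine Finset.sum_congr rfl fun i hi => ?_
            rw [← mul_assoc, ← Polynomial.C_mul]
      _ = ∑ i ∈ Finset.range (m+4+1),
            Polynomial.C ((if i < m+4 then d i else 0) + d (m+4) * c i) * Th R i := by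
          rw [← Finset.sum_add_distrib]
          refine Finset.sum_congr rfl fun i hi => ?_
          rw [Polynomial.C_add, add_mul]
  have hsingle : ∀ (j : ℕ) (r : R), j < m+4+1 →
      ∑ i ∈ Finset.range (m+4+1), Polynomial.C (if i = j then r else 0) * Th R i
        = Polynomial.C r * Th R j := by
    intro j r hj
    rw [Finset.sum_eq_single j]
    · rw [if_pos rfl]
    · intro b _ hb; rw [if_neg hb, map_zero, zero_mul]
    · intro h; exact absurd (Finset.mem_range.mpr hj) h
  -- Equation A
  obtain ⟨d, hd, hA⟩ := hpos 1 (m+3)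
  rw [show 1 + (m+3) + 1 = m + 4 + 1 by omega] at hA
  rw [hlt 1 (by omega), hlt (m+3) (by omega)] at hA
  have hA2 : (∑ i ∈ Finset.range (m+4+1),
        Polynomial.C ((if i = m+4 then (1:R) else 0) + (if i = m+2 then 1 else 0)) * Th R i)
      = ∑ i ∈ Finset.range (m+4+1),
          Polynomial.C ((if i < m+4 then d i else 0) + d (m+4) * c i) * Th R i := by
    rw [← htrans d, ← hA]
    show _ = Th R 1 * Th R (m+3)
    rw [Th_mul_one' R m]
    calc ∑ i ∈ Finset.range (m+4+1),
          Polynomial.C ((if i = m+4 then (1:R) else 0) + (if i = m+2 then 1 else 0)) * Th R i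
        = (∑ i ∈ Finset.range (m+4+1), Polynomial.C (if i = m+4 then (1:R) else 0) * Th R i)
            + ∑ i ∈ Finset.range (m+4+1), Polynomial.C (if i = m+2 then (1:R) else 0) * Th R i := by
          rw [← Finset.sum_add_distrib]
          exact Finset.sum_congr rfl fun i _ => by rw [← add_mul, ← Polynomial.C_add]
      _ = Th R (m+4) + Th R (m+2) := by
          rw [hsingle (m+4) 1 (by omega), hsingle (m+2) 1 (by omega), Polynomial.C_1,
            one_mul, one_mul]
  have hAc := basis_unique (Th R) hTh (m+4+1) _ _ hA2
  have hdk : d (m+4) = 1 := by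
    have h := hAc (m+4) (by omega)
    simp [show m+4 ≠ m+2 by omega, hck] at h
    exact h.symm
  have hcA : ∀ i, i < m+4 → i ≠ m+2 → c i = 0 := by
    intro i hi hne
    have h := hAc i (by omega)
    simp [show i ≠ m+4 by omega, hne, hi, hdk] at h
    refine hcap (c i) (hc i) ?_
    have hneg : -(c i) = d i := by linear_combination h
    rw [hneg]; exact hd i
  -- Equation B
  obtain ⟨e, he, hB⟩ := hpos 2 (m+2)
  rw [show 2 + (m+2) + 1 = m + 4 + 1 by omega] at hB
  rw [hlt 2 (by omega), hlt (m+2) (by omega)] at hB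
  have hB2 : (∑ i ∈ Finset.range (m+4+1),
        Polynomial.C ((if i = m+4 then (1:R) else 0)
          + (if i = m then (if m = 0 then (2:R) else 1) else 0)) * Th R i)
      = ∑ i ∈ Finset.range (m+4+1),
          Polynomial.C ((if i < m+4 then e i else 0) + e (m+4) * c i) * Th R i := by
    rw [← htrans e, ← hB]
    show _ = Th R 2 * Th R (m+2)
    rw [Th_mul_two R m]
    calc ∑ i ∈ Finset.range (m+4+1),
          Polynomial.C ((if i = m+4 then (1:R) else 0)
            + (if i = m then (if m = 0 then (2:R) else 1) else 0)) * Th R i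
        = (∑ i ∈ Finset.range (m+4+1), Polynomial.C (if i = m+4 then (1:R) else 0) * Th R i)
            + ∑ i ∈ Finset.range (m+4+1),
                Polynomial.C (if i = m then (if m = 0 then (2:R) else 1) else 0) * Th R i := by
          rw [← Finset.sum_add_distrib]
          exact Finset.sum_congr rfl fun i _ => by rw [← add_mul, ← Polynomial.C_add]
      _ = Th R (m+4) + Polynomial.C (if m = 0 then (2:R) else 1) * Th R m := by
          rw [hsingle (m+4) 1 (by omega), hsingle m _ (by omega), Polynomial.C_1, one_mul]
  have hBc := basis_unique (Th R) hTh (m+4+1) _ _ hB2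
  have hek : e (m+4) = 1 := by
    have h := hBc (m+4) (by omega)
    simp [show m+4 ≠ m by omega, hck] at h
    exact h.symm
  have hcB : c (m+2) = 0 := by
    have h := hBc (m+2) (by omega)
    simp [show m+2 ≠ m+4 by omega, show m+2 ≠ m by omega, show m+2 < m+4 by omega, hek] at h
    refine hcap (c (m+2)) (hc (m+2)) ?_
    have hneg : -(c (m+2)) = e (m+2) := by linear_combination h
    rw [hneg]; exact he (m+2)
  have hczero : ∀ i < m+4, c i = 0 := by
    intro i hi
    by_cases hne : i = m+2
    · rw [hne]; exact hcB
    · exact hcA i hi hne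
  show P (m+4) = Th R (m+4)
  rw [hgeq, Finset.sum_range_succ, hck, Finset.sum_eq_zero, map_one, one_mul, zero_add]
  intro i hi
  rw [hczero i (Finset.mem_range.mp hi), map_zero, zero_mul]
end

section
/- Let G_n(x) ∈ ℤ[q^{±1}][x] be defined by G_0 = G_1 = 0 and G_n = Σ_{i=1}^{⌊n/2⌋} q^{4i-n-2} S_{n-2i}(x) for n ≥ 2. Then G_{n+1} = q^{-1} x G_n - q^{-2} G_{n-1} + q^{n-1} A_n for all n ≥ 1, where A_n = 1 if n is odd and 0 if n is even. -/
open Polynomial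

/-- Sₙ viewed in ℤ[q^{±1}][x]. -/
noncomputable def ScL (n : ℕ) : Polynomial (LaurentPolynomial ℤ) :=
  (Sc n).map (Int.castRingHom (LaurentPolynomial ℤ))

/-- Gₙ(x) ∈ ℤ[q^{±1}][x]: G₀ = G₁ = 0, Gₙ = Σ_{i=1}^{⌊n/2⌋} q^{4i-n-2} S_{n-2i}(x). -/
noncomputable def Gp (n : ℕ) : Polynomial (LaurentPolynomial ℤ) :=
  if n ≤ 1 then 0 else
    ∑ i ∈ Finset.Icc 1 (n / 2),
      Polynomial.C (LaurentPolynomial.T (4 * (i : ℤ) - (n : ℤ) - 2)) * ScL (n - 2 * i)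

namespace Aux

noncomputable def t (k : ℤ) : Polynomial (LaurentPolynomial ℤ) :=
  Polynomial.C (LaurentPolynomial.T k)

lemma tmul (a b : ℤ) : t a * t b = t (a + b) := by
  rw [t, t, t, ← map_mul, ← LaurentPolynomial.T_add]

lemma ScL_rec (n : ℕ) : ScL (n + 2) = X * ScL (n + 1) - ScL n := by
  simp [ScL, Sc, Polynomial.map_sub, Polynomial.map_mul]

lemma Gp_eq (n : ℕ) : Gp n = ∑ i ∈ Finset.Icc 1 (n / 2),
    t (4 * (i : ℤ) - (n : ℤ) - 2) * ScL (n - 2 * i) := by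
  unfold Gp t
  split
  · next h =>
    have h2 : n / 2 = 0 := by omega
    simp [h2]
  · rfl

lemma gp_rec (n : ℕ) : Gp (n + 2) = t 2 * Gp n + t (-(n : ℤ)) * ScL n := by
  rw [Gp_eq, Gp_eq]
  have hdiv : (n + 2) / 2 = n / 2 + 1 := by omega
  rw [hdiv]
  have hins : Finset.Icc 1 (n / 2 + 1) = insert 1 (Finset.Icc 2 (n / 2 + 1)) := by
    ext x; simp only [Finset.mem_Icc, Finset.mem_insert]; omega
  rw [hins, Finset.sum_insert (by simp)]
  have hmap : Finset.Icc 2 (n / 2 + 1) = (Finset.Icc 1 (n / 2)).map (addRightEmbedding 1) := by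
    rw [Finset.map_add_right_Icc]
  rw [hmap, Finset.sum_map, Finset.mul_sum]
  have hA : t (4 * ((1:ℕ):ℤ) - ((n+2 : ℕ):ℤ) - 2) * ScL (n + 2 - 2 * 1) = t (-(n:ℤ)) * ScL n := by
    have e1 : (4 * ((1:ℕ):ℤ) - ((n+2 : ℕ):ℤ) - 2) = -(n:ℤ) := by push_cast; ring
    have e2 : n + 2 - 2 * 1 = n := by omega
    rw [e1, e2]
  have hB : ∀ i ∈ Finset.Icc 1 (n / 2),
      t (4 * ((addRightEmbedding 1 i : ℕ):ℤ) - ((n+2:ℕ):ℤ) - 2) * ScL (n + 2 - 2 * (addRightEmbedding 1 i))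
      = t 2 * (t (4 * (i:ℤ) - (n:ℤ) - 2) * ScL (n - 2 * i)) := by
    intro i hi
    simp only [Finset.mem_Icc] at hi
    simp only [addRightEmbedding_apply]
    have e2 : n + 2 - 2 * (i + 1) = n - 2 * i := by omega
    rw [e2, ← mul_assoc, tmul]
    congr 2
    push_cast
    ring
  rw [hA, Finset.sum_congr rfl hB, add_comm]

lemma main (n : ℕ) : Gp (n + 2) = t (-1) * X * Gp (n + 1) - t (-2) * Gp n +
    t (n : ℤ) * (if Odd (n + 1) then 1 else 0) := by
  induction n using Nat.twoStepInduction with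
  | zero =>
    rw [Gp_eq 2, Gp_eq 1, Gp_eq 0]
    norm_num [ScL, Sc, t]
  | one =>
    rw [Gp_eq 3, Gp_eq 2, Gp_eq 1]
    norm_num [ScL, Sc, t]
  | more n ih _ =>
    have h2 := gp_rec n
    have h3 := gp_rec (n + 1)
    have h4 := gp_rec (n + 2)
    have hs := ScL_rec n
    push_cast at h3 h4 ⊢
    have hodd : (if Odd (n + 2 + 1) then (1:Polynomial (LaurentPolynomial ℤ)) else 0)
        = (if Odd (n + 1) then 1 else 0) := by
      congr 1
      simp only [eq_iff_iff]
      constructor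
      · rintro ⟨k, hk⟩; exact ⟨k - 1, by omega⟩
      · rintro ⟨k, hk⟩; exact ⟨k + 1, by omega⟩
    rw [hodd]
    have c1 : t 2 * t (n : ℤ) = t ((n:ℤ) + 2) := by rw [tmul]; ring_nf
    have c2 : t (-1) * t (-((n:ℤ) + 1)) = t (-((n:ℤ) + 2)) := by rw [tmul]; ring_nf
    have c3 : t (-2) * t (-(n:ℤ)) = t (-((n:ℤ) + 2)) := by rw [tmul]; ring_nf
    linear_combination h4 - t (-1) * X * h3 + t (-((n:ℤ)+2)) * hs + t 2 * ih + t (-2) * h2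
      + (if Odd (n + 1) then (1:Polynomial (LaurentPolynomial ℤ)) else 0) * c1
      - X * ScL (n + 1) * c2 + ScL n * c3

end Aux

/-- G_{n+1} = q⁻¹ x Gₙ - q⁻² G_{n-1} + q^{n-1} Aₙ for n ≥ 1,
    where Aₙ = 1 for n odd and 0 for n even. -/

theorem stmt_14 (n : ℕ) (hn : 1 ≤ n) :
    Gp (n + 1) = Polynomial.C (LaurentPolynomial.T (-1)) * X * Gp n -
      Polynomial.C (LaurentPolynomial.T (-2)) * Gp (n - 1) +
      Polynomial.C (LaurentPolynomial.T ((n : ℤ) - 1)) * (if Odd n then 1 else 0) := by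
  obtain ⟨m, rfl⟩ : ∃ m, n = m + 1 := ⟨n - 1, by omega⟩
  have h := Aux.main m
  rw [show ((m + 1 : ℕ) : ℤ) - 1 = (m : ℤ) by push_cast; ring,
    show m + 1 - 1 = m from rfl]
  simpa [Aux.t] using h
end
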